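/- arXiv:1507.07038 — 3 statements merged into one kernel-verified Lean document; each statement's English description precedes it below -/
import Mathlib

section
/- Let x be a nonempty string of length n over Σ, let g be the largest letter occurring in x, and let k be the number of occurrences of g in x. Then for every integer i with 0 ≤ i ≤ k, applying the star operation n − i times to x yields the string g^i consisting of i copies of g; in particular x^{n*} = ε, so the sequence x, x*, x^{2*}, … ends with g^k, …, g^2, g^1, g^0 = ε. -/
variable {α : Type*} [LinearOrder α]

/-- The star operation on strings: delete the letter `x_h`, where `h` is the
start of the longest non-decreasing suffix (so `h = 1` iff the whole string is
non-decreasing, and otherwise `x_{h-1} > x_h ≤ x_{h+1} ≤ ⋯ ≤ x_n`). -/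
def vstar : List α → List α
  | [] => []
  | a :: t => if List.IsChain (· ≤ ·) (a :: t) then t else a :: vstar t

/-- V-order `≺` between distinct strings `x`, `y`: either `x` lies on the path
`y, y*, y^{2*}, …, ε`, or (if neither lies on the path of the other) taking the
least `s, t` with `x^{(s+1)*} = y^{(t+1)*}` and the greatest position `j` at
which `s = x^{s*}` and `t = y^{t*}` differ, the letter of `x^{s*}` at `j` is
smaller than that of `y^{t*}`. -/
def VLess (x y : List α) : Prop :=
  (∃ k : ℕ, 0 < k ∧ vstar^[k] y = x) ∨
  ((¬ ∃ k : ℕ, vstar^[k] y = x) ∧ (¬ ∃ k : ℕ, vstar^[k] x = y) ∧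
    ∃ s t : ℕ,
      vstar^[s + 1] x = vstar^[t + 1] y ∧
      (∀ s' t' : ℕ, vstar^[s' + 1] x = vstar^[t' + 1] y → s ≤ s' ∧ t ≤ t') ∧
      ∃ j : ℕ, j < (vstar^[s] x).length ∧
        (∀ j' : ℕ, j < j' → (vstar^[s] x)[j']? = (vstar^[t] y)[j']?) ∧
        ∃ a b : α, (vstar^[s] x)[j]? = some a ∧ (vstar^[t] y)[j]? = some b ∧
          a < b)

lemma vstar_sublist (x : List α) : List.Sublist (vstar x) x := by
  induction x with
  | nil => simp [vstar]
  | cons a t ih =>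
    rw [vstar]
    split
    · exact List.sublist_cons_self a t
    · exact ih.cons₂ a

lemma vstar_length (x : List α) (hx : x ≠ []) : (vstar x).length = x.length - 1 := by
  induction x with
  | nil => simp at hx
  | cons a t ih =>
    rw [vstar]
    split
    · simp
    · rename_i h
      have ht : t ≠ [] := by
        rintro rfl
        exact h (by simp)
      have : 1 ≤ t.length := List.length_pos_iff.mpr ht
      simp [ih ht]
      omega

lemma vstar_replicate (g : α) (n : ℕ) : vstar (List.replicate (n + 1) g) = List.replicate n g := by
  rw [List.replicate_succ, vstar, if_pos]
  rw [← List.replicate_succ]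
  exact List.isChain_iff_pairwise.mpr (by
    apply List.pairwise_replicate.mpr
    simp)

lemma vstar_iterate_replicate (g : α) (m i : ℕ) :
    vstar^[m] (List.replicate (i + m) g) = List.replicate i g := by
  induction m with
  | zero => simp
  | succ m ih =>
    rw [Function.iterate_succ_apply]
    have : i + (m + 1) = (i + m) + 1 := by omega
    rw [this, vstar_replicate, ih]

lemma count_vstar_of_not_chain (x : List α) (g : α) (hmax : ∀ a ∈ x, a ≤ g)
    (h : ¬ List.IsChain (· ≤ ·) x) : (vstar x).count g = x.count g := by
  induction x with
  | nil => simp at h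
  | cons a t ih =>
    rw [vstar, if_neg h]
    by_cases ht : List.IsChain (· ≤ ·) t
    · match t, ht with
      | [], _ => exact absurd (by simp) h
      | b :: t', ht =>
        have hba : b < a := by
          by_contra hba
          push_neg at hba
          exact h (List.isChain_cons_cons.mpr ⟨hba, ht⟩)
        have hbg : b ≠ g := by
          have hag : a ≤ g := hmax a (by simp)
          intro hb
          subst hb
          exact absurd hba (not_lt.mpr hag)
        rw [vstar, if_pos ht]
        rw [List.count_cons, List.count_cons, List.count_cons]
        simp [hbg, hbg.symm]
    · have : ∀ a ∈ t, a ≤ g := fun b hb => hmax b (List.mem_cons_of_mem a hb)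
      rw [List.count_cons, List.count_cons, ih this ht]

lemma vstar_keeps (x : List α) (g : α) (hmem : g ∈ x) (hmax : ∀ a ∈ x, a ≤ g)
    (hx : x ≠ List.replicate x.length g) :
    g ∈ vstar x ∧ (vstar x).count g = x.count g := by
  have hmax' : ∀ a ∈ vstar x, a ≤ g := fun a ha => hmax a ((vstar_sublist x).mem ha)
  by_cases hc : List.IsChain (· ≤ ·) x
  · match x, hc with
    | [], _ => simp at hmem
    | a :: t, hc =>
      have hag : a ≠ g := by
        intro hag
        apply hx
        apply List.eq_replicate_of_mem
        intro b hb
        rcases List.mem_cons.mp hb with rfl | hbt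
        · exact hag
        · have h1 : a ≤ b := by
            rcases List.isChain_iff_pairwise.mp hc with _ | ⟨hp, _⟩
            exact hp b hbt
          have h2 : b ≤ g := hmax b hb
          exact le_antisymm h2 (hag ▸ h1)
      rw [vstar, if_pos hc]
      have hgt : g ∈ t := by
        rcases List.mem_cons.mp hmem with rfl | h
        · exact absurd rfl hag
        · exact h
      exact ⟨hgt, by simp [List.count_cons, Ne.symm hag, hag]⟩
  · have hcount := count_vstar_of_not_chain x g hmax hc
    refine ⟨?_, hcount⟩
    have : 0 < (vstar x).count g := by
      rw [hcount]
      exact List.count_pos_iff.mpr hmem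
    exact List.count_pos_iff.mp this

lemma main_aux : ∀ n : ℕ, ∀ x : List α, x.length = n → ∀ g : α, g ∈ x →
    (∀ a ∈ x, a ≤ g) → ∀ i : ℕ, i ≤ x.count g →
    vstar^[x.length - i] x = List.replicate i g := by
  intro n
  induction n using Nat.strong_induction_on with
  | _ n ih =>
    intro x hlen g hmem hmax i hi
    by_cases hx : x = List.replicate x.length g
    · have hcnt : x.count g = x.length := by
        rw [hx]; simp
      have hix : i ≤ x.length := le_trans hi (le_of_eq hcnt)
      set n := x.length with hn
      have key : x = List.replicate (i + (n - i)) g := by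
        rw [hx]
        congr 1
        omega
      rw [key]
      exact vstar_iterate_replicate g (n - i) i
    · obtain ⟨hmem', hcnt⟩ := vstar_keeps x g hmem hmax hx
      have hne : x ≠ [] := fun h => by simp [h] at hmem
      have hlen' : (vstar x).length = x.length - 1 := vstar_length x hne
      have hclt : x.count g < x.length := by
        rcases lt_or_eq_of_le (List.count_le_length : x.count g ≤ x.length) with h | h
        · exact h
        · exact absurd (List.count_eq_length.mp h |> fun hh =>
            List.eq_replicate_of_mem (fun b hb => (hh b hb).symm)) hx
      have h1 : 1 ≤ x.length := List.length_pos_iff.mpr hne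
      have : x.length - i = ((vstar x).length - i) + 1 := by omega
      rw [this, Function.iterate_succ_apply]
      have hmax' : ∀ a ∈ vstar x, a ≤ g := fun a ha => hmax a ((vstar_sublist x).mem ha)
      exact ih (vstar x).length (by omega) (vstar x) rfl g hmem' hmax' i (hcnt ▸ hi)

/-- For a nonempty string `x` of length `n` with largest letter `g` occurring
`k` times, applying the star operation `n - i` times yields `g^i` for every
`0 ≤ i ≤ k`; in particular `x^{n*} = ε`, so the star path of `x` ends with
`g^k, …, g², g¹, g⁰ = ε`. -/
theorem vstar_iterate_ends_with_powers_of_max {α : Type*} [LinearOrder α]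
    (x : List α) (g : α) (k : ℕ)
    (hne : x ≠ []) (hmem : g ∈ x) (hmax : ∀ a ∈ x, a ≤ g)
    (hk : k = x.count g) :
    (∀ i : ℕ, i ≤ k → vstar^[x.length - i] x = List.replicate i g) ∧
    vstar^[x.length] x = [] := by
  have hmain : ∀ i : ℕ, i ≤ k → vstar^[x.length - i] x = List.replicate i g := by
    intro i hi
    exact main_aux x.length x rfl g hmem hmax i (hk ▸ hi)
  refine ⟨hmain, ?_⟩
  have := hmain 0 (Nat.zero_le k)
  simpa using this
end

section
/- For any strings v and x over Σ, if v is a proper subsequence of x (that is, v is obtained from x by deleting at least one letter), then v ≺ x in V-order. -/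
variable {α : Type*} [LinearOrder α]

namespace VProof

variable {α : Type*} [LinearOrder α]

lemma vstar_nil : vstar ([] : List α) = [] := rfl

lemma vstar_cons (a : α) (t : List α) :
    vstar (a :: t) = if List.IsChain (· ≤ ·) (a :: t) then t else a :: vstar t := rfl

lemma vstar_singleton (a : α) : vstar [a] = [] := by
  simp [vstar_cons]

lemma length_vstar (x : List α) : (vstar x).length = x.length - 1 := by
  induction x with
  | nil => simp [vstar_nil]
  | cons a t ih =>
    rw [vstar_cons]
    split
    · simp
    · rename_i h
      have ht : t ≠ [] := by rintro rfl; exact h (List.isChain_singleton a)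
      have : t.length ≠ 0 := fun h0 => ht (List.length_eq_zero_iff.mp h0)
      simp only [List.length_cons, ih]
      omega

/-- The fundamental "snoc" rule for `vstar`. -/
lemma vstar_snoc (z : List α) (b a : α) :
    vstar (z ++ [b] ++ [a]) =
      if b ≤ a then vstar (z ++ [b]) ++ [a] else z ++ [b] := by
  induction z with
  | nil =>
    simp only [List.nil_append]
    by_cases hba : b ≤ a
    · rw [if_pos hba]
      have hch : List.IsChain (· ≤ ·) [b, a] := by
        simp [List.isChain_cons_cons, hba]
      rw [show ([b] ++ [a] : List α) = b :: [a] by rfl, vstar_cons, if_pos hch,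
        vstar_singleton]
      simp
    · rw [if_neg hba]
      have hch : ¬ List.IsChain (· ≤ ·) [b, a] := by
        simp [List.isChain_cons_cons]
        exact lt_of_not_ge hba
      rw [show ([b] ++ [a] : List α) = b :: [a] by rfl, vstar_cons, if_neg hch,
        vstar_singleton]
  | cons c z' ih =>
    have hgl : (c :: (z' ++ [b])).getLast? = some b := by
      rw [show c :: (z' ++ [b]) = (c :: z') ++ [b] by simp]
      exact List.getLast?_concat
    have hiff : List.IsChain (· ≤ ·) (c :: (z' ++ [b] ++ [a])) ↔
        List.IsChain (· ≤ ·) (c :: (z' ++ [b])) ∧ b ≤ a := by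
      rw [show c :: (z' ++ [b] ++ [a]) = (c :: (z' ++ [b])) ++ [a] by simp,
        List.isChain_append]
      simp [hgl]
    by_cases hba : b ≤ a
    · rw [if_pos hba]
      by_cases hch : List.IsChain (· ≤ ·) (c :: (z' ++ [b]))
      · have : List.IsChain (· ≤ ·) (c :: (z' ++ [b] ++ [a])) := hiff.mpr ⟨hch, hba⟩
        rw [show (c :: z') ++ [b] ++ [a] = c :: (z' ++ [b] ++ [a]) by simp,
          vstar_cons, if_pos this,
          show (c :: z') ++ [b] = c :: (z' ++ [b]) by simp, vstar_cons, if_pos hch]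
      · have hnc : ¬ List.IsChain (· ≤ ·) (c :: (z' ++ [b] ++ [a])) := fun h =>
          hch (hiff.mp h).1
        rw [show (c :: z') ++ [b] ++ [a] = c :: (z' ++ [b] ++ [a]) by simp,
          vstar_cons, if_neg hnc,
          show (c :: z') ++ [b] = c :: (z' ++ [b]) by simp, vstar_cons, if_neg hch,
          ih, if_pos hba]
        simp
    · rw [if_neg hba]
      have hnc : ¬ List.IsChain (· ≤ ·) (c :: (z' ++ [b] ++ [a])) := fun h =>
        hba (hiff.mp h).2
      rw [show (c :: z') ++ [b] ++ [a] = c :: (z' ++ [b] ++ [a]) by simp,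
        vstar_cons, if_neg hnc, ih, if_neg hba]
      simp

/-- The last letter does not decrease when applying `vstar`. -/
lemma last_vstar_snoc (z : List α) (b : α) :
    vstar (z ++ [b]) = [] ∨ ∃ w c, vstar (z ++ [b]) = w ++ [c] ∧ b ≤ c := by
  rcases List.eq_nil_or_concat z with rfl | ⟨w, c, rfl⟩
  · left; simpa using vstar_singleton b
  · right
    rw [List.concat_eq_append, vstar_snoc]
    by_cases hcb : c ≤ b
    · exact ⟨vstar (w ++ [c]), b, by rw [if_pos hcb], le_refl b⟩
    · exact ⟨w, c, by rw [if_neg hcb], le_of_lt (lt_of_not_ge hcb)⟩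

/-- `Dlt S T`: at the greatest position where they differ (everything beyond
agrees), the letter of `S` is smaller than that of `T`. -/
def Dlt (S T : List α) : Prop :=
  ∃ j : ℕ, (∀ j' : ℕ, j < j' → S[j']? = T[j']?) ∧
    ∃ a b : α, S[j]? = some a ∧ T[j]? = some b ∧ a < b

lemma Dlt_ne {S T : List α} (h : Dlt S T) : S ≠ T := by
  obtain ⟨j, _, a, b, ha, hb, hab⟩ := h
  intro hEq
  rw [hEq, hb] at ha
  exact absurd (Option.some_injective _ ha) (ne_of_gt hab)

lemma Dlt_length {S T : List α} (h : Dlt S T) : S.length = T.length := by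
  obtain ⟨j, hbey, a, b, ha, hb, _⟩ := h
  have hjS : j < S.length := (List.getElem?_eq_some_iff.mp ha).1
  have hjT : j < T.length := (List.getElem?_eq_some_iff.mp hb).1
  by_contra hne
  rcases Nat.lt_or_ge S.length T.length with hlt | hge
  · have h1 : S[T.length - 1]? = T[T.length - 1]? := hbey _ (by omega)
    have h2 : S[T.length - 1]? = none := List.getElem?_eq_none (by omega)
    have h3 : T.length - 1 < T.length := by omega
    rw [h2, List.getElem?_eq_getElem h3] at h1
    exact absurd h1.symm (Option.some_ne_none _)
  · have hlt : T.length < S.length := by omega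
    have h1 : S[S.length - 1]? = T[S.length - 1]? := hbey _ (by omega)
    have h2 : T[S.length - 1]? = none := List.getElem?_eq_none (by omega)
    have h3 : S.length - 1 < S.length := by omega
    rw [h2, List.getElem?_eq_getElem h3] at h1
    exact absurd h1 (Option.some_ne_none _)

lemma Dlt_trans {S T U : List α} (h1 : Dlt S T) (h2 : Dlt T U) : Dlt S U := by
  obtain ⟨j1, hb1, a1, b1, ha1, hb1', hab1⟩ := h1
  obtain ⟨j2, hb2, a2, b2, ha2, hb2', hab2⟩ := h2
  rcases lt_trichotomy j1 j2 with h | h | h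
  · refine ⟨j2, fun j' hj' => (hb1 j' (lt_trans h hj')).trans (hb2 j' hj'), a2, b2,
      ?_, hb2', hab2⟩
    rw [hb1 j2 h]; exact ha2
  · subst h
    rw [hb1'] at ha2
    have : b1 = a2 := Option.some_injective _ ha2
    subst this
    exact ⟨j1, fun j' hj' => (hb1 j' hj').trans (hb2 j' hj'), a1, b2, ha1, hb2',
      lt_trans hab1 hab2⟩
  · refine ⟨j1, fun j' hj' => (hb1 j' hj').trans (hb2 j' (lt_trans h hj')), a1, b1,
      ha1, ?_, hab1⟩
    rw [← hb2 j1 h]; exact hb1'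

lemma Dlt_append {S T : List α} (hlen : S.length = T.length) (a : α)
    (h : Dlt S T) : Dlt (S ++ [a]) (T ++ [a]) := by
  obtain ⟨j, hbey, x, y, hx, hy, hxy⟩ := h
  have hjS : j < S.length := (List.getElem?_eq_some_iff.mp hx).1
  refine ⟨j, fun j' hj' => ?_, x, y, ?_, ?_, hxy⟩
  · rcases Nat.lt_or_ge j' S.length with hlt | hge
    · rw [List.getElem?_append_left hlt, List.getElem?_append_left (hlen ▸ hlt)]
      exact hbey j' hj'
    · rw [List.getElem?_append_right hge, List.getElem?_append_right (hlen ▸ hge),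
        hlen]
  · rw [List.getElem?_append_left hjS]; exact hx
  · rw [List.getElem?_append_left (hlen ▸ hjS)]; exact hy

lemma Dlt_last {S T : List α} (hlen : S.length = T.length) {a b : α} (hab : a < b) :
    Dlt (S ++ [a]) (T ++ [b]) := by
  refine ⟨S.length, fun j' hj' => ?_, a, b, ?_, ?_, hab⟩
  · rw [List.getElem?_eq_none (by simp; omega), List.getElem?_eq_none (by simp; omega)]
  · exact List.getElem?_concat_length
  · rw [hlen]; exact List.getElem?_concat_length

/-- Pointwise domination. -/
def PW (S T : List α) : Prop :=
  S.length = T.length ∧ ∀ (p : ℕ) (x y : α), S[p]? = some x → T[p]? = some y → x ≤ y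

lemma PW_refl (S : List α) : PW S S :=
  ⟨rfl, fun p x y hx hy => le_of_eq (Option.some_injective _ (hx.symm.trans hy))⟩

lemma PW_append {S T : List α} (h : PW S T) {a b : α} (hab : a ≤ b) :
    PW (S ++ [a]) (T ++ [b]) := by
  refine ⟨by simp [h.1], fun p x y hx hy => ?_⟩
  rcases Nat.lt_or_ge p S.length with hlt | hge
  · rw [List.getElem?_append_left hlt] at hx
    rw [List.getElem?_append_left (h.1 ▸ hlt)] at hy
    exact h.2 p x y hx hy
  · rcases Nat.lt_or_ge p (S.length + 1) with hlt1 | hge1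
    · have hp : p = S.length := by omega
      subst hp
      rw [List.getElem?_concat_length] at hx
      rw [h.1, List.getElem?_concat_length] at hy
      rw [← Option.some_injective _ hx, ← Option.some_injective _ hy]
      exact hab
    · rw [List.getElem?_eq_none (by simp; omega)] at hx
      exact absurd hx.symm (Option.some_ne_none _)

lemma Dlt_of_PW {S T : List α} (h : PW S T) (hne : S ≠ T) : Dlt S T := by
  classical
  have hex : ∃ i : ℕ, S[i]? ≠ T[i]? := by
    by_contra hc
    push_neg at hc
    exact hne (List.ext_getElem? hc)
  obtain ⟨i, hi⟩ := hex
  have hiS : i < S.length := by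
    by_contra hge
    rw [List.getElem?_eq_none (by omega), List.getElem?_eq_none (by rw [← h.1]; omega)]
      at hi
    exact hi rfl
  set P : ℕ → Prop := fun j => S[j]? ≠ T[j]? with hP
  set j := Nat.findGreatest P S.length with hj
  have hPj : P j := Nat.findGreatest_spec (le_of_lt hiS) hi
  have hjlen : j < S.length := by
    rcases Nat.lt_or_ge j S.length with h' | h'
    · exact h'
    · exfalso
      apply hPj
      rw [List.getElem?_eq_none h', List.getElem?_eq_none (by rw [← h.1]; omega)]
  refine ⟨j, fun j' hj' => ?_, ?_⟩
  · rcases Nat.lt_or_ge S.length j' with hgt | hle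
    · rw [List.getElem?_eq_none (by omega), List.getElem?_eq_none (by rw [← h.1]; omega)]
    · by_contra hne'
      exact Nat.findGreatest_is_greatest (hj ▸ hj') hle hne'
  · have hjT : j < T.length := by rw [← h.1]; exact hjlen
    refine ⟨S[j], T[j], List.getElem?_eq_getElem hjlen, List.getElem?_eq_getElem hjT, ?_⟩
    have hle := h.2 j S[j] T[j] (List.getElem?_eq_getElem hjlen) (List.getElem?_eq_getElem hjT)
    have hne2 : S[j] ≠ T[j] := by
      intro hEq
      apply hPj
      rw [List.getElem?_eq_getElem hjlen, List.getElem?_eq_getElem hjT, hEq]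
    exact lt_of_le_of_ne hle hne2

/-- Same-length comparison: at the level just before the paths merge, `Dlt` holds. -/
def Plt (S T : List α) : Prop :=
  ∃ k : ℕ, vstar^[k + 1] S = vstar^[k + 1] T ∧ Dlt (vstar^[k] S) (vstar^[k] T)

lemma Plt_ne {S T : List α} (h : Plt S T) : S ≠ T := by
  obtain ⟨k, _, hD⟩ := h
  intro hEq
  exact Dlt_ne hD (by rw [hEq])

lemma Plt_mk0 {S T : List α} (h : vstar S = vstar T) (hD : Dlt S T) : Plt S T :=
  ⟨0, by simpa using h, by simpa using hD⟩

lemma Plt_lift {S T : List α} (h : Plt (vstar S) (vstar T)) : Plt S T := by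
  obtain ⟨k, heq, hD⟩ := h
  refine ⟨k + 1, ?_, ?_⟩
  · rw [Function.iterate_succ_apply, Function.iterate_succ_apply]
    exact heq
  · rw [Function.iterate_succ_apply, Function.iterate_succ_apply]
    exact hD

lemma iter_eq_propagate {S T : List α} {m p : ℕ} (h : vstar^[m] S = vstar^[m] T)
    (hmp : m ≤ p) : vstar^[p] S = vstar^[p] T := by
  obtain ⟨q, rfl⟩ := Nat.exists_eq_add_of_le hmp
  rw [Nat.add_comm, Function.iterate_add_apply, Function.iterate_add_apply, h]

lemma Plt_step {S T : List α} (h : Plt S T) :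
    (vstar S = vstar T ∧ Dlt S T) ∨ Plt (vstar S) (vstar T) := by
  obtain ⟨k, heq, hD⟩ := h
  cases k with
  | zero => exact Or.inl ⟨by simpa using heq, by simpa using hD⟩
  | succ k' =>
    right
    refine ⟨k', ?_, ?_⟩
    · rw [← Function.iterate_succ_apply, ← Function.iterate_succ_apply]
      exact heq
    · rw [← Function.iterate_succ_apply, ← Function.iterate_succ_apply]
      exact hD

lemma Plt_iter {S T : List α} (h : Plt S T) (m : ℕ) :
    vstar^[m] S = vstar^[m] T ∨ Plt (vstar^[m] S) (vstar^[m] T) := by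
  induction m with
  | zero => exact Or.inr (by simpa using h)
  | succ m' ih =>
    rcases ih with heq | hp
    · left
      rw [Function.iterate_succ_apply', Function.iterate_succ_apply', heq]
    · rcases Plt_step hp with ⟨heq, _⟩ | hp'
      · left
        rw [Function.iterate_succ_apply', Function.iterate_succ_apply']
        exact heq
      · right
        rw [Function.iterate_succ_apply', Function.iterate_succ_apply']
        exact hp'

lemma Plt_trans {S T U : List α} (h1 : Plt S T) (h2 : Plt T U) : Plt S U := by
  obtain ⟨k1, heq1, hD1⟩ := h1
  obtain ⟨k2, heq2, hD2⟩ := h2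
  rcases lt_trichotomy k1 k2 with h | h | h
  · refine ⟨k2, ?_, ?_⟩
    · exact (iter_eq_propagate heq1 (by omega)).trans heq2
    · rw [iter_eq_propagate heq1 (by omega : k1 + 1 ≤ k2)]
      exact hD2
  · subst h
    exact ⟨k1, heq1.trans heq2, Dlt_trans hD1 hD2⟩
  · refine ⟨k1, ?_, ?_⟩
    · exact heq1.trans (iter_eq_propagate heq2 (by omega))
    · rw [← iter_eq_propagate heq2 (by omega : k2 + 1 ≤ k1)]
      exact hD1

lemma snoc_inj {l1 l2 : List α} {x y : α} (h : l1 ++ [x] = l2 ++ [y]) :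
    l1 = l2 ∧ x = y := by
  have hlen : l1.length = l2.length := by
    have := congrArg List.length h
    simpa using this
  obtain ⟨h1, h2⟩ := List.append_inj h hlen
  exact ⟨h1, by simpa using h2⟩

/-- The key pointwise bound: `u ≤ (vstar u) ++ [a]` pointwise, whenever the
last letter of `u` is at most `a`. -/
lemma PW_vstar_snoc : ∀ (n : ℕ) (z : List α), z.length ≤ n → ∀ b a : α, b ≤ a →
    PW (z ++ [b]) (vstar (z ++ [b]) ++ [a]) := by
  intro n
  induction n with
  | zero =>
    intro z hz b a hba
    have : z = [] := List.length_eq_zero_iff.mp (by omega)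
    subst this
    simp only [List.nil_append, vstar_singleton]
    exact PW_append (PW_refl []) hba
  | succ n' ih =>
    intro z hz b a hba
    rcases List.eq_nil_or_concat z with rfl | ⟨w, c, rfl⟩
    · simp only [List.nil_append, vstar_singleton]
      exact PW_append (PW_refl []) hba
    · rw [List.concat_eq_append, vstar_snoc]
      by_cases hcb : c ≤ b
      · rw [if_pos hcb]
        have hw : w.length ≤ n' := by
          have := hz
          simp at this
          omega
        exact PW_append (ih w hw c b hcb) hba
      · rw [if_neg hcb]
        exact PW_append (PW_refl _) hba

def Sh1 (S T : List α) : Prop :=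
  ∃ (A B : List α) (a : α), S = A ++ [a] ∧ T = B ++ [a] ∧ A.length = B.length ∧ Plt A B

def Sh2 (S T : List α) : Prop :=
  ∃ (C z : List α) (a : α), S = C ++ [a] ∧ T = z ∧ C.length + 1 = z.length ∧
    (∃ w c, z = w ++ [c] ∧ a < c) ∧ (C = vstar z ∨ Plt C (vstar z))

def Sh3 (S T : List α) : Prop :=
  ∃ (z w : List α) (a : α), S = z ∧ T = vstar w ++ [a] ∧ z.length = w.length ∧
    (∃ u c, z = u ++ [c] ∧ a < c) ∧ (∃ u c, w = u ++ [c] ∧ c ≤ a) ∧ Plt z w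

def Sh4 (S T : List α) : Prop :=
  ∃ (u : List α) (a : α), S = u ∧ T = vstar u ++ [a] ∧ (∃ w c, u = w ++ [c] ∧ c ≤ a)

lemma shape_main : ∀ (n : ℕ) (S T : List α), S.length ≤ n →
    (Sh1 S T ∨ Sh2 S T ∨ Sh3 S T ∨ Sh4 S T) → S = T ∨ Plt S T := by
  intro n
  induction n with
  | zero =>
    intro S T hlen hsh
    exfalso
    have hS : S ≠ [] := by
      rcases hsh with ⟨A, B, a, rfl, _⟩ | ⟨C, z, a, rfl, _⟩ |
        ⟨z, w, a, rfl, _, _, ⟨u, c, rfl, _⟩, _⟩ | ⟨u, a, rfl, _, ⟨w, c, rfl, _⟩⟩ <;>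
        simp
    have := List.length_eq_zero_iff.mp (by omega : S.length = 0)
    exact hS this
  | succ n ih =>
    rintro S T hlen (⟨A, B, a, rfl, rfl, hABlen, hAB⟩ | hsh | hsh | hsh)
    -- ############ Sh1 ############
    · have hAne : A ≠ [] := by
        rintro rfl
        have hB : B = [] := List.length_eq_zero_iff.mp (by simpa using hABlen.symm)
        exact Plt_ne hAB (by rw [hB])
      have hBne : B ≠ [] := by
        rintro rfl
        have hA : A = [] := List.length_eq_zero_iff.mp (by simpa using hABlen)
        exact hAne hA
      obtain ⟨zA, cA, rfl⟩ : ∃ zA cA, A = zA ++ [cA] := by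
        rcases List.eq_nil_or_concat A with h | ⟨zA, cA, h⟩
        · exact absurd h hAne
        · exact ⟨zA, cA, by simpa using h⟩
      obtain ⟨zB, cB, rfl⟩ : ∃ zB cB, B = zB ++ [cB] := by
        rcases List.eq_nil_or_concat B with h | ⟨zB, cB, h⟩
        · exact absurd h hBne
        · exact ⟨zB, cB, by simpa using h⟩
      have hlenA : (vstar (zA ++ [cA])).length + 1 = (zA ++ [cA]).length := by
        rw [length_vstar]; simp
      have hlenB : (vstar (zB ++ [cB])).length + 1 = (zB ++ [cB]).length := by
        rw [length_vstar]; simp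
      by_cases hA : cA ≤ a <;> by_cases hB : cB ≤ a
      -- both alive
      · rcases Plt_step hAB with ⟨heq, hD⟩ | hp
        · right
          refine Plt_mk0 ?_ (Dlt_append hABlen a hD)
          rw [vstar_snoc, vstar_snoc, if_pos hA, if_pos hB, heq]
        · have hrec := ih (vstar (zA ++ [cA]) ++ [a]) (vstar (zB ++ [cB]) ++ [a])
            (by simp only [List.length_append, List.length_cons, List.length_nil]
                  at hlen hlenA ⊢; omega)
            (Or.inl ⟨vstar (zA ++ [cA]), vstar (zB ++ [cB]), a, rfl, rfl,
              (by simp only [List.length_append, List.length_cons, List.length_nil]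
                    at hABlen hlenA hlenB ⊢; omega), hp⟩)
          rcases hrec with heq | hplt
          · exact absurd (snoc_inj heq).1 (Plt_ne hp)
          · right
            apply Plt_lift
            rw [vstar_snoc, vstar_snoc, if_pos hA, if_pos hB]
            exact hplt
      -- S alive, T dead
      · have hrel : vstar (zA ++ [cA]) = vstar (zB ++ [cB]) ∨
            Plt (vstar (zA ++ [cA])) (vstar (zB ++ [cB])) := by
          rcases Plt_step hAB with ⟨heq, _⟩ | hp
          · exact Or.inl heq
          · exact Or.inr hp
        have hrec := ih (vstar (zA ++ [cA]) ++ [a]) (zB ++ [cB])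
          (by simp only [List.length_append, List.length_cons, List.length_nil]
                at hlen hlenA ⊢; omega)
          (Or.inr (Or.inl ⟨vstar (zA ++ [cA]), zB ++ [cB], a, rfl, rfl,
            (by simp only [List.length_append, List.length_cons, List.length_nil]
                  at hABlen hlenA ⊢; omega),
            ⟨zB, cB, rfl, lt_of_not_ge hB⟩, hrel⟩))
        rcases hrec with heq | hplt
        · exact absurd (snoc_inj heq).2 (ne_of_lt (lt_of_not_ge hB))
        · right
          apply Plt_lift
          rw [vstar_snoc, vstar_snoc, if_pos hA, if_neg hB]
          exact hplt
      -- S dead, T alive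
      · have hrec := ih (zA ++ [cA]) (vstar (zB ++ [cB]) ++ [a])
          (by simp only [List.length_append, List.length_cons, List.length_nil]
                at hlen ⊢; omega)
          (Or.inr (Or.inr (Or.inl ⟨zA ++ [cA], zB ++ [cB], a, rfl, rfl, hABlen,
            ⟨zA, cA, rfl, lt_of_not_ge hA⟩, ⟨zB, cB, rfl, hB⟩, hAB⟩)))
        rcases hrec with heq | hplt
        · exact absurd (snoc_inj heq).2.symm (ne_of_lt (lt_of_not_ge hA))
        · right
          apply Plt_lift
          rw [vstar_snoc, vstar_snoc, if_neg hA, if_pos hB]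
          exact hplt
      -- both dead
      · right
        apply Plt_lift
        rw [vstar_snoc, vstar_snoc, if_neg hA, if_neg hB]
        exact hAB
    -- ############ Sh2 ############
    · obtain ⟨C, z, a, rfl, rfl, hClen, ⟨w, c, rfl, hac⟩, hrel⟩ := hsh
      have hwC : C.length = w.length := by simp at hClen; omega
      have hD : Dlt (C ++ [a]) (w ++ [c]) := Dlt_last hwC hac
      rcases List.eq_nil_or_concat C with rfl | ⟨zc, cc, rfl⟩
      · -- C = []
        have hw : w = [] := List.length_eq_zero_iff.mp (by simpa using hwC.symm)
        subst hw
        right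
        refine Plt_mk0 ?_ hD
        rw [List.nil_append, vstar_singleton, List.nil_append, vstar_singleton]
      · rw [List.concat_eq_append] at *
        have hzlen : (vstar (w ++ [c])).length + 1 = (w ++ [c]).length := by
          rw [length_vstar]; simp
        by_cases hcc : cc ≤ a
        · -- C alive
          obtain ⟨w2, c2, hvz, hc2⟩ : ∃ w2 c2, vstar (w ++ [c]) = w2 ++ [c2] ∧ c ≤ c2 := by
            rcases last_vstar_snoc w c with h | ⟨w2, c2, h1, h2⟩
            · exfalso
              have hl := congrArg List.length h
              rw [length_vstar] at hl
              simp only [List.length_nil] at hl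
              have e9 : (zc ++ [cc]).length = zc.length + 1 := by simp
              omega
            · exact ⟨w2, c2, h1, h2⟩
          have hrel' : vstar (zc ++ [cc]) = vstar (vstar (w ++ [c])) ∨
              Plt (vstar (zc ++ [cc])) (vstar (vstar (w ++ [c]))) := by
            rcases hrel with hCz | hp
            · exact Or.inl (congrArg vstar hCz)
            · rcases Plt_step hp with ⟨heq, _⟩ | hp'
              · exact Or.inl heq
              · exact Or.inr hp'
          have hClen2 : (vstar (zc ++ [cc])).length + 1 = (zc ++ [cc]).length := by
            rw [length_vstar]; simp
          have e1 : (vstar (zc ++ [cc]) ++ [a]).length = (vstar (zc ++ [cc])).length + 1 := by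
            simp
          have e2 : (zc ++ [cc] ++ [a]).length = (zc ++ [cc]).length + 1 := by simp
          have hlen' : (vstar (zc ++ [cc]) ++ [a]).length ≤ n := by omega
          have hlen'' : (vstar (zc ++ [cc])).length + 1 = (vstar (w ++ [c])).length := by
            omega
          have hrec := ih (vstar (zc ++ [cc]) ++ [a]) (vstar (w ++ [c])) hlen'
            (Or.inr (Or.inl ⟨vstar (zc ++ [cc]), vstar (w ++ [c]), a, rfl, rfl, hlen'',
              ⟨w2, c2, hvz, lt_of_lt_of_le hac hc2⟩, hrel'⟩))
          rcases hrec with heq | hplt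
          · exfalso
            rw [hvz] at heq
            exact absurd (snoc_inj heq).2 (ne_of_lt (lt_of_lt_of_le hac hc2))
          · right
            apply Plt_lift
            rw [vstar_snoc, if_pos hcc]
            exact hplt
        · -- C dead
          rcases hrel with hCz | hp
          · right
            refine Plt_mk0 ?_ hD
            rw [vstar_snoc, if_neg hcc]
            exact hCz
          · right
            apply Plt_lift
            rw [vstar_snoc, if_neg hcc]
            exact hp
    -- ############ Sh3 ############
    · obtain ⟨z, w, a, rfl, rfl, hzwlen, ⟨u, cz, rfl, hacz⟩, ⟨u', cw, rfl, hcwa⟩, hzw⟩ := hsh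
      right
      rcases Plt_step hzw with ⟨heq0, hD0⟩ | hp1
      · -- k = 0 impossible
        exfalso
        obtain ⟨j, hbey, x, y, hx, hy, hxy⟩ := hD0
        have hjlt : j < (u ++ [cz]).length := (List.getElem?_eq_some_iff.mp hx).1
        have hulen : u.length = u'.length := by simp at hzwlen; omega
        have hlast1 : (u ++ [cz])[u.length]? = some cz := List.getElem?_concat_length
        have hlast2 : (u' ++ [cw])[u'.length]? = some cw := List.getElem?_concat_length
        rcases Nat.lt_or_ge j u.length with hj | hj
        · have hthis := hbey u.length hj
          rw [hlast1, hulen, hlast2] at hthis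
          have hEq : cz = cw := Option.some_injective _ hthis
          rw [hEq] at hacz
          exact absurd hacz (not_lt.mpr hcwa)
        · have hju : j = u.length := by
            simp only [List.length_append, List.length_cons, List.length_nil] at hjlt
            omega
          subst hju
          rw [hlast1] at hx
          rw [hulen, hlast2] at hy
          obtain rfl : cz = x := Option.some_injective _ hx
          obtain rfl : cw = y := Option.some_injective _ hy
          exact absurd hxy (not_lt.mpr (le_of_lt (lt_of_le_of_lt hcwa hacz)))
      · rcases last_vstar_snoc u' cw with hvw | ⟨u2, c2, hvw, hc2⟩
        · -- vstar w = [] : impossible unless singletons, which contradict Plt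
          exfalso
          have l1 := congrArg List.length hvw
          rw [length_vstar] at l1
          simp only [List.length_nil] at l1
          have e1 : (u' ++ [cw]).length = u'.length + 1 := by simp
          have e2 : (u ++ [cz]).length = u.length + 1 := by simp
          have hu : u = [] := List.length_eq_zero_iff.mp (by omega)
          have hu' : u' = [] := List.length_eq_zero_iff.mp (by omega)
          subst hu hu'
          have hz : vstar ([cz] : List α) = [] := vstar_singleton _
          have hw' : vstar ([cw] : List α) = [] := vstar_singleton _
          simp only [List.nil_append] at hp1
          rw [hz, hw'] at hp1
          exact Plt_ne hp1 rfl
        · have l2 := congrArg List.length hvw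
          rw [length_vstar] at l2
          have e1 : (u' ++ [cw]).length = u'.length + 1 := by simp
          have e2 : (u ++ [cz]).length = u.length + 1 := by simp
          have e3 : (u2 ++ [c2]).length = u2.length + 1 := by simp
          by_cases h2a : c2 ≤ a
          · -- T side still alive
            obtain ⟨u3, c3, hvz, hc3⟩ : ∃ u3 c3, vstar (u ++ [cz]) = u3 ++ [c3] ∧ cz ≤ c3 := by
              rcases last_vstar_snoc u cz with h | ⟨u3, c3, h1, h2⟩
              · exfalso
                have l1 := congrArg List.length h
                rw [length_vstar] at l1
                simp only [List.length_nil] at l1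
                omega
              · exact ⟨u3, c3, h1, h2⟩
            have l3 := congrArg List.length hvz
            rw [length_vstar] at l3
            have e4 : (u3 ++ [c3]).length = u3.length + 1 := by simp
            have hlenz : (vstar (u ++ [cz])).length ≤ n := by
              rw [length_vstar]; omega
            have hleneq : (vstar (u ++ [cz])).length = (vstar (u' ++ [cw])).length := by
              rw [length_vstar, length_vstar]; omega
            have hac3 : a < c3 := lt_of_lt_of_le hacz hc3
            have hsh3 : Sh3 (vstar (u ++ [cz])) (vstar (vstar (u' ++ [cw])) ++ [a]) :=
              ⟨vstar (u ++ [cz]), vstar (u' ++ [cw]), a, rfl, rfl, hleneq,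
                ⟨u3, c3, hvz, hac3⟩, ⟨u2, c2, hvw, h2a⟩, hp1⟩
            have hrec := ih (vstar (u ++ [cz])) (vstar (vstar (u' ++ [cw])) ++ [a])
              hlenz (Or.inr (Or.inr (Or.inl hsh3)))
            rcases hrec with heq | hplt
            · exfalso
              rw [hvz] at heq
              exact absurd (snoc_inj heq).2 (ne_of_gt hac3)
            · apply Plt_lift
              have hvT : vstar (vstar (u' ++ [cw]) ++ [a]) =
                  vstar (vstar (u' ++ [cw])) ++ [a] := by
                rw [hvw, vstar_snoc, if_pos h2a, ← hvw]
              rw [hvT]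
              exact hplt
          · -- T side dies
            apply Plt_lift
            have hvT : vstar (vstar (u' ++ [cw]) ++ [a]) = vstar (u' ++ [cw]) := by
              rw [hvw, vstar_snoc, if_neg h2a, ← hvw]
            rw [hvT]
            exact hp1
    -- ############ Sh4 ############
    · obtain ⟨u, a, rfl, rfl, ⟨w, c, rfl, hca⟩⟩ := hsh
      by_cases hST : (w ++ [c] : List α) = vstar (w ++ [c]) ++ [a]
      · exact Or.inl hST
      · have hPW : PW (w ++ [c]) (vstar (w ++ [c]) ++ [a]) :=
          PW_vstar_snoc w.length w le_rfl c a hca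
        have hD := Dlt_of_PW hPW hST
        right
        rcases last_vstar_snoc w c with hvw | ⟨w2, c2, hvw, hc2⟩
        · refine Plt_mk0 ?_ hD
          rw [hvw, List.nil_append, vstar_singleton]
        · by_cases h2a : c2 ≤ a
          · -- T side alive
            have hvT : vstar (vstar (w ++ [c]) ++ [a]) =
                vstar (vstar (w ++ [c])) ++ [a] := by
              rw [hvw, vstar_snoc, if_pos h2a, ← hvw]
            have e1 : (w ++ [c]).length = w.length + 1 := by simp
            have hrec := ih (vstar (w ++ [c])) (vstar (vstar (w ++ [c])) ++ [a])
              (by rw [length_vstar]; omega)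
              (Or.inr (Or.inr (Or.inr ⟨vstar (w ++ [c]), a, rfl, rfl,
                ⟨w2, c2, hvw, h2a⟩⟩)))
            rcases hrec with heq | hplt
            · refine Plt_mk0 ?_ hD
              rw [hvT]
              exact heq
            · apply Plt_lift
              rw [hvT]
              exact hplt
          · -- T side dies
            refine Plt_mk0 ?_ hD
            rw [hvw, vstar_snoc, if_neg h2a, ← hvw]

/-- Deleting any single letter gives a string `≼` `vstar x`. -/
lemma crux : ∀ (x : List α) (i : ℕ), i < x.length →
    x.eraseIdx i = vstar x ∨ Plt (x.eraseIdx i) (vstar x) := by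
  intro x
  induction x using List.reverseRecOn with
  | nil => intro i hi; simp at hi
  | append_singleton y a ihy =>
    intro i hi
    rcases Nat.lt_or_ge i y.length with hiy | hiy
    · -- i < y.length
      rw [List.eraseIdx_append_of_lt_length hiy]
      rcases List.eq_nil_or_concat y with rfl | ⟨z, b, rfl⟩
      · simp at hiy
      · rw [List.concat_eq_append] at *
        have hel : ((z ++ [b]).eraseIdx i).length + 1 = (z ++ [b]).length := by
          rw [List.length_eraseIdx, if_pos hiy]
          omega
        have hvl : (vstar (z ++ [b])).length + 1 = (z ++ [b]).length := by
          rw [length_vstar]; simp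
        by_cases hba : b ≤ a
        · rw [vstar_snoc, if_pos hba]
          rcases ihy i hiy with heq | hplt
          · left; rw [heq]
          · have hsh : Sh1 ((z ++ [b]).eraseIdx i ++ [a]) (vstar (z ++ [b]) ++ [a]) :=
              ⟨(z ++ [b]).eraseIdx i, vstar (z ++ [b]), a, rfl, rfl, by omega, hplt⟩
            exact shape_main ((z ++ [b]).eraseIdx i ++ [a]).length _ _ le_rfl
              (Or.inl hsh)
        · rw [vstar_snoc, if_neg hba]
          have hsh : Sh2 ((z ++ [b]).eraseIdx i ++ [a]) (z ++ [b]) :=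
            ⟨(z ++ [b]).eraseIdx i, z ++ [b], a, rfl, rfl, by omega,
              ⟨z, b, rfl, lt_of_not_ge hba⟩, ihy i hiy⟩
          exact shape_main ((z ++ [b]).eraseIdx i ++ [a]).length _ _ le_rfl
            (Or.inr (Or.inl hsh))
    · -- i = y.length
      have hey : (y ++ [a]).eraseIdx i = y := by
        have hi' : i = y.length := by
          simp only [List.length_append, List.length_cons, List.length_nil] at hi
          omega
        subst hi'
        rw [List.eraseIdx_append_of_length_le (le_refl y.length)]
        simp
      rw [hey]
      rcases List.eq_nil_or_concat y with rfl | ⟨z, b, rfl⟩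
      · left
        rw [List.nil_append, vstar_singleton]
      · rw [List.concat_eq_append] at *
        by_cases hba : b ≤ a
        · rw [vstar_snoc, if_pos hba]
          have hsh : Sh4 (z ++ [b]) (vstar (z ++ [b]) ++ [a]) :=
            ⟨z ++ [b], a, rfl, rfl, ⟨z, b, rfl, hba⟩⟩
          exact shape_main (z ++ [b]).length _ _ le_rfl
            (Or.inr (Or.inr (Or.inr hsh)))
        · rw [vstar_snoc, if_neg hba]
          left; rfl

lemma sublist_erase {v x : List α} (h : v.Sublist x) :
    v ≠ x → ∃ i, i < x.length ∧ v.Sublist (x.eraseIdx i) := by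
  induction h with
  | slnil => intro hne; exact absurd rfl hne
  | @cons l₁ l₂ a h ih =>
    intro _
    exact ⟨0, by simp, by simpa using h⟩
  | @cons_cons l₁ l₂ a h ih =>
    intro hne
    have hne' : l₁ ≠ l₂ := by
      intro hEq; exact hne (by rw [hEq])
    obtain ⟨i, hi, hsub⟩ := ih hne'
    refine ⟨i + 1, by simp; omega, ?_⟩
    rw [List.eraseIdx_cons_succ]
    exact hsub.cons_cons a

lemma length_iter (k : ℕ) (x : List α) : (vstar^[k] x).length = x.length - k := by
  induction k with
  | zero => simp
  | succ k ih =>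
    rw [Function.iterate_succ_apply', length_vstar, ih]
    omega

/-- Main combinatorial lemma: a sublist is `≼` the correspondingly iterated star. -/
lemma good : ∀ (N : ℕ) (x v : List α), x.length ≤ N → v.Sublist x →
    v = vstar^[x.length - v.length] x ∨ Plt v (vstar^[x.length - v.length] x) := by
  intro N
  induction N with
  | zero =>
    intro x v hx hsub
    have hx0 : x = [] := List.length_eq_zero_iff.mp (by omega)
    subst hx0
    have hv0 : v = [] := List.sublist_nil.mp hsub
    subst hv0
    left; simp
  | succ N ih =>
    intro x v hx hsub
    by_cases hvx : v = x
    · left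
      subst hvx
      simp
    · obtain ⟨i, hi, hsub'⟩ := sublist_erase hsub hvx
      have hu_len : (x.eraseIdx i).length + 1 = x.length := by
        rw [List.length_eraseIdx, if_pos hi]
        omega
      have ihu := ih (x.eraseIdx i) v (by omega) hsub'
      have hvu : v.length ≤ (x.eraseIdx i).length := hsub'.length_le
      have hd : x.length - v.length = ((x.eraseIdx i).length - v.length) + 1 := by
        omega
      rw [hd, Function.iterate_succ_apply]
      rcases crux x i hi with hcr | hcr
      · rw [← hcr]
        exact ihu
      · rcases Plt_iter hcr ((x.eraseIdx i).length - v.length) with heq | hplt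
        · rw [← heq]
          exact ihu
        · rcases ihu with hveq | hvp
          · right; rw [← hveq] at hplt; exact hplt
          · right; exact Plt_trans hvp hplt

end VProof

open VProof in
theorem vless_of_proper_sublist' {α : Type*} [LinearOrder α]
    (v x : List α) (hsub : v.Sublist x) (hne : v ≠ x) :
    VLess v x := by
  have hlenle : v.length ≤ x.length := hsub.length_le
  have hlen : v.length < x.length := by
    rcases lt_or_eq_of_le hlenle with h | h
    · exact h
    · exact absurd (hsub.eq_of_length h) hne
  have hd0 : 0 < x.length - v.length := by omega
  rcases good x.length x v le_rfl hsub with heq | hplt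
  · exact Or.inl ⟨x.length - v.length, hd0, heq.symm⟩
  · right
    obtain ⟨k0, hk_eq, hk_D⟩ := hplt
    have hk_ne : vstar^[k0] v ≠ vstar^[k0] (vstar^[x.length - v.length] x) :=
      Dlt_ne hk_D
    have hk0 : k0 < v.length := by
      by_contra hge
      apply hk_ne
      have h1 : (vstar^[k0] v).length = 0 := by rw [length_iter]; omega
      have h2 : (vstar^[k0] (vstar^[x.length - v.length] x)).length = 0 := by
        rw [length_iter, length_iter]; omega
      rw [List.length_eq_zero_iff.mp h1, List.length_eq_zero_iff.mp h2]
    have hiter : ∀ t : ℕ, vstar^[t + (x.length - v.length)] x =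
        vstar^[t] (vstar^[x.length - v.length] x) := fun t =>
      Function.iterate_add_apply _ t _ x
    refine ⟨?_, ?_, k0, k0 + (x.length - v.length), ?_, ?_, ?_⟩
    · rintro ⟨k, hk⟩
      have hlk := congrArg List.length hk
      rw [length_iter] at hlk
      have hkd : k = x.length - v.length := by omega
      subst hkd
      exact hk_ne (by rw [hk])
    · rintro ⟨k, hk⟩
      have hlk := congrArg List.length hk
      rw [length_iter] at hlk
      omega
    · rw [show k0 + (x.length - v.length) + 1 = (k0 + 1) + (x.length - v.length) by
        ring, hiter (k0 + 1)]
      exact hk_eq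
    · intro s' t' h'
      have hle1 := congrArg List.length h'
      rw [length_iter, length_iter] at hle1
      constructor
      · by_contra hs
        push_neg at hs
        have hs1 : s' + 1 ≤ k0 := by omega
        have ht'' : t' + 1 = (s' + 1) + (x.length - v.length) := by omega
        rw [ht'', hiter (s' + 1)] at h'
        exact hk_ne (iter_eq_propagate h' hs1)
      · by_contra ht
        push_neg at ht
        rcases Nat.lt_or_ge s' k0 with hs | hs
        · have hs1 : s' + 1 ≤ k0 := by omega
          have ht'' : t' + 1 = (s' + 1) + (x.length - v.length) := by omega
          rw [ht'', hiter (s' + 1)] at h'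
          exact hk_ne (iter_eq_propagate h' hs1)
        · omega
    · rw [hiter k0]
      obtain ⟨j, hbey, a, b, ha, hb, hab⟩ := hk_D
      exact ⟨j, (List.getElem?_eq_some_iff.mp ha).1, hbey, a, b, ha, hb, hab⟩

/-- If `v` is a proper subsequence of `x` (obtained from `x` by deleting at
least one letter), then `v ≺ x` in V-order. -/
theorem vless_of_proper_sublist {α : Type*} [LinearOrder α]
    (v x : List α) (hsub : v.Sublist x) (hne : v ≠ x) :
    VLess v x :=
  vless_of_proper_sublist' v x hsub hne
end

section
/- For any two distinct strings x, y over Σ and any letter λ ∈ Σ: x ≺ y in V-order if and only if xλ ≺ yλ (where xλ denotes x with the letter λ appended at the right end). -/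
variable {α : Type*} [LinearOrder α]

set_option linter.unusedSectionVars false

/- ═══════════════ auxiliary lemmas ═══════════════ -/

lemma vstar_nil : vstar ([] : List α) = [] := rfl

lemma vstar_cons (a : α) (t : List α) :
    vstar (a :: t) = if List.IsChain (· ≤ ·) (a :: t) then t else a :: vstar t := rfl

lemma vstar_singleton (a : α) : vstar [a] = [] := by
  rw [vstar_cons, if_pos (List.isChain_singleton a)]

lemma length_vstar (z : List α) : (vstar z).length = z.length - 1 := by
  induction z with
  | nil => rfl
  | cons a t ih =>
    rw [vstar_cons]
    split
    · simp
    · rename_i hch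
      have ht : t ≠ [] := by rintro rfl; exact hch (List.isChain_singleton a)
      have h1 : 0 < t.length := List.length_pos_iff.mpr ht
      simp only [List.length_cons, ih]
      omega

lemma length_viter (k : ℕ) (z : List α) : (vstar^[k] z).length = z.length - k := by
  induction k with
  | zero => simp
  | succ k ih => rw [Function.iterate_succ_apply', length_vstar, ih]; omega

lemma viter_nil (k : ℕ) : vstar^[k] ([] : List α) = [] :=
  Function.iterate_fixed rfl k

lemma viter_of_le {k : ℕ} {z : List α} (h : z.length ≤ k) : vstar^[k] z = [] :=
  List.length_eq_zero_iff.mp (by rw [length_viter]; omega)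

lemma exists_getLast {l : List α} (h : l ≠ []) : ∃ a, l.getLast? = some a :=
  Option.isSome_iff_exists.mp (List.getLast?_isSome.mpr h)

lemma getLast?_cons_ne {t : List α} (c : α) (h : t ≠ []) :
    (c :: t).getLast? = t.getLast? := by
  cases t with
  | nil => exact absurd rfl h
  | cons b u => exact List.getLast?_cons_cons

lemma getLast_le_vstar :
    ∀ z : List α, vstar z ≠ [] → ∀ a b : α,
      z.getLast? = some a → (vstar z).getLast? = some b → a ≤ b := by
  intro z
  induction z with
  | nil => intro h; rw [vstar_nil] at h; exact absurd rfl h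
  | cons c t ih =>
    intro hne a b ha hb
    rw [vstar_cons] at hne hb
    by_cases hch : List.IsChain (· ≤ ·) (c :: t)
    · rw [if_pos hch] at hne hb
      rw [getLast?_cons_ne c hne, hb] at ha
      exact le_of_eq (Option.some_injective _ ha.symm)
    · rw [if_neg hch] at hne hb
      have ht : t ≠ [] := by rintro rfl; exact hch (List.isChain_singleton c)
      rw [getLast?_cons_ne c ht] at ha
      by_cases hvt : vstar t = []
      · have hlt : t.length = 1 := by
          have h2 := length_vstar t
          rw [hvt] at h2
          have h3 : 0 < t.length := List.length_pos_iff.mpr ht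
          simp at h2; omega
        obtain ⟨d, rfl⟩ := List.length_eq_one_iff.mp hlt
        rw [hvt] at hb
        have hb' : b = c := by simpa using hb.symm
        have ha' : a = d := by simpa using ha.symm
        have hdc : ¬ (c ≤ d) := fun h => hch (List.isChain_pair.mpr h)
        subst hb' ha'
        exact le_of_lt (not_le.mp hdc)
      · rw [getLast?_cons_ne c hvt] at hb
        exact ih hvt a b ha hb

lemma getLast_le_viter :
    ∀ (r : ℕ) (z : List α), vstar^[r] z ≠ [] → ∀ a b : α,
      z.getLast? = some a → (vstar^[r] z).getLast? = some b → a ≤ b := by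
  intro r
  induction r with
  | zero =>
    intro z _ a b ha hb
    rw [Function.iterate_zero_apply] at hb
    rw [hb] at ha
    exact le_of_eq (Option.some_injective _ ha.symm)
  | succ r ih =>
    intro z hne a b ha hb
    rw [Function.iterate_succ_apply'] at hne hb
    have hmid : vstar^[r] z ≠ [] := fun h0 => hne (by rw [h0, vstar_nil])
    obtain ⟨c, hc⟩ := exists_getLast hmid
    exact le_trans (ih z hmid a c ha hc) (getLast_le_vstar _ hne c b hc hb)

lemma vstar_append_le {x : List α} {lam a : α}
    (ha : x.getLast? = some a) (hle : a ≤ lam) :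
    vstar (x ++ [lam]) = vstar x ++ [lam] := by
  induction x with
  | nil => simp at ha
  | cons c t ih =>
    rw [List.cons_append, vstar_cons]
    by_cases hch : List.IsChain (· ≤ ·) (c :: (t ++ [lam]))
    · rw [if_pos hch]
      have h1 : List.IsChain (· ≤ ·) (c :: t) := by
        have h2 := List.isChain_append.mp (show List.IsChain (· ≤ ·) ((c :: t) ++ [lam]) by
          rwa [List.cons_append])
        exact h2.1
      rw [vstar_cons, if_pos h1]
    · rw [if_neg hch]
      have ht : t ≠ [] := by
        rintro rfl
        apply hch
        have hca : c = a := by simpa using ha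
        subst hca
        exact List.isChain_pair.mpr hle
      have h1 : ¬ List.IsChain (· ≤ ·) (c :: t) := by
        intro h1
        apply hch
        rw [show (c :: (t ++ [lam])) = (c :: t) ++ [lam] by rw [List.cons_append]]
        refine List.isChain_append.mpr ⟨h1, List.isChain_singleton lam, ?_⟩
        intro p hp q hq
        rw [ha] at hp
        simp at hp hq
        rw [← hp, ← hq]
        exact hle
      rw [vstar_cons, if_neg h1, List.cons_append]
      rw [ih (by rwa [getLast?_cons_ne c ht] at ha)]

lemma vstar_append_gt {x : List α} {lam a : α}
    (ha : x.getLast? = some a) (hgt : lam < a) :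
    vstar (x ++ [lam]) = x := by
  induction x with
  | nil => simp at ha
  | cons c t ih =>
    rw [List.cons_append, vstar_cons]
    have hch : ¬ List.IsChain (· ≤ ·) (c :: (t ++ [lam])) := by
      intro h
      have h2 := List.isChain_append.mp (show List.IsChain (· ≤ ·) ((c :: t) ++ [lam]) by
        rwa [List.cons_append])
      have h3 := h2.2.2 a (by rw [ha]; rfl) lam (by rfl)
      exact absurd h3 (not_le.mpr hgt)
    rw [if_neg hch]
    by_cases ht : t = []
    · subst ht
      simp only [List.nil_append]
      rw [vstar_singleton]
    · rw [ih (by rwa [getLast?_cons_ne c ht] at ha)]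

lemma path_corr_aux (lam : α) :
    ∀ (n : ℕ) (x : List α), x.length ≤ n →
    ∃ K, K ≤ x.length ∧
      (∀ k ≤ K, vstar^[k] (x ++ [lam]) = vstar^[k] x ++ [lam]) ∧
      (∀ k, K < k → vstar^[k] (x ++ [lam]) = vstar^[k-1] x) ∧
      (∀ k < K, vstar^[k] x ≠ [] ∧ ∀ a, (vstar^[k] x).getLast? = some a → a ≤ lam) ∧
      (vstar^[K] x = [] ∨ ∃ a, (vstar^[K] x).getLast? = some a ∧ lam < a) := by
  have base : ∀ x : List α, x = [] →
      ∃ K, K ≤ x.length ∧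
      (∀ k ≤ K, vstar^[k] (x ++ [lam]) = vstar^[k] x ++ [lam]) ∧
      (∀ k, K < k → vstar^[k] (x ++ [lam]) = vstar^[k-1] x) ∧
      (∀ k < K, vstar^[k] x ≠ [] ∧ ∀ a, (vstar^[k] x).getLast? = some a → a ≤ lam) ∧
      (vstar^[K] x = [] ∨ ∃ a, (vstar^[K] x).getLast? = some a ∧ lam < a) := by
    rintro x rfl
    refine ⟨0, le_rfl, ?_, ?_, by omega, Or.inl rfl⟩
    · intro k hk
      interval_cases k
      rfl
    · intro k hk
      obtain ⟨k', rfl⟩ : ∃ k', k = k' + 1 := ⟨k - 1, by omega⟩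
      rw [List.nil_append, Function.iterate_succ_apply, vstar_singleton, viter_nil,
        show k' + 1 - 1 = k' from rfl, viter_nil]
  intro n
  induction n with
  | zero =>
    intro x hx
    exact base x (List.length_eq_zero_iff.mp (by omega))
  | succ n ih =>
    intro x hx
    by_cases hxnil : x = []
    · exact base x hxnil
    · obtain ⟨a, ha⟩ := exists_getLast hxnil
      by_cases hle : a ≤ lam
      · obtain ⟨K', h1', h2', h3', h4', h5'⟩ :=
          ih (vstar x) (by rw [length_vstar]; omega)
        have hxpos : 0 < x.length := List.length_pos_iff.mpr hxnil
        have hK'len : K' ≤ x.length - 1 := by rwa [length_vstar] at h1'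
        refine ⟨K' + 1, by omega, ?_, ?_, ?_, ?_⟩
        · intro k hk
          cases k with
          | zero => rfl
          | succ k' =>
            rw [Function.iterate_succ_apply, Function.iterate_succ_apply,
              vstar_append_le ha hle]
            exact h2' k' (by omega)
        · intro k hk
          obtain ⟨j, rfl⟩ : ∃ j, k = j + 2 := ⟨k - 2, by omega⟩
          rw [Function.iterate_succ_apply, vstar_append_le ha hle, h3' (j+1) (by omega),
            show j + 1 - 1 = j from rfl, show j + 2 - 1 = j + 1 from rfl,
            Function.iterate_succ_apply]
        · intro k hk
          cases k with
          | zero =>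
            refine ⟨by simpa using hxnil, fun b hb => ?_⟩
            rw [Function.iterate_zero_apply, ha] at hb
            exact (Option.some_injective _ hb) ▸ hle
          | succ k' =>
            rw [Function.iterate_succ_apply]
            exact h4' k' (by omega)
        · rw [Function.iterate_succ_apply]
          exact h5'
      · refine ⟨0, Nat.zero_le _, ?_, ?_, by omega, Or.inr ⟨a, ha, not_le.mp hle⟩⟩
        · intro k hk
          interval_cases k
          rfl
        · intro k hk
          obtain ⟨k', rfl⟩ : ∃ k', k = k' + 1 := ⟨k - 1, by omega⟩
          rw [Function.iterate_succ_apply, vstar_append_gt ha (not_le.mp hle),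
            show k' + 1 - 1 = k' from rfl]

lemma path_corr (x : List α) (lam : α) :
    ∃ K, K ≤ x.length ∧
      (∀ k ≤ K, vstar^[k] (x ++ [lam]) = vstar^[k] x ++ [lam]) ∧
      (∀ k, K < k → vstar^[k] (x ++ [lam]) = vstar^[k-1] x) ∧
      (∀ k < K, vstar^[k] x ≠ [] ∧ ∀ a, (vstar^[k] x).getLast? = some a → a ≤ lam) ∧
      (vstar^[K] x = [] ∨ ∃ a, (vstar^[K] x).getLast? = some a ∧ lam < a) :=
  path_corr_aux lam x.length x le_rfl

lemma breaklast {y : List α} {lam : α} {K : ℕ}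
    (h : vstar^[K] y = [] ∨ ∃ a, (vstar^[K] y).getLast? = some a ∧ lam < a) :
    ∀ k, K ≤ k → ∀ b, (vstar^[k] y).getLast? = some b → lam < b := by
  intro k hk b hb
  have hne : vstar^[k] y ≠ [] := by
    intro h0; rw [h0] at hb; simp at hb
  have heqit : vstar^[k] y = vstar^[k - K] (vstar^[K] y) := by
    rw [← Function.iterate_add_apply]
    congr 1
    omega
  rcases h with h0 | ⟨a, ha, hlam⟩
  · rw [heqit, h0, viter_nil] at hne
    exact absurd rfl hne
  · have hab : a ≤ b :=
      getLast_le_viter (k - K) (vstar^[K] y) (by rw [← heqit]; exact hne) a b ha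
        (by rw [← heqit]; exact hb)
    exact lt_of_lt_of_le hlam hab

/-- Comparison at the rightmost differing position. -/
def Cmp (u v : List α) : Prop :=
  ∃ j : ℕ, j < u.length ∧ (∀ j' : ℕ, j < j' → u[j']? = v[j']?) ∧
    ∃ a b : α, u[j]? = some a ∧ v[j]? = some b ∧ a < b

lemma cmp_of_last {u v : List α} (hlen : u.length = v.length) {a b : α}
    (ha : u.getLast? = some a) (hb : v.getLast? = some b) (hab : a < b) : Cmp u v := by
  have hu : u ≠ [] := by rintro rfl; simp at ha
  have hul : 0 < u.length := List.length_pos_iff.mpr hu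
  refine ⟨u.length - 1, by omega, ?_, a, b, ?_, ?_, hab⟩
  · intro j' hj'
    rw [List.getElem?_eq_none (by omega), List.getElem?_eq_none (by omega)]
  · rw [← List.getLast?_eq_getElem?]; exact ha
  · rw [hlen, ← List.getLast?_eq_getElem?]; exact hb

lemma cmp_append {u v : List α} (hlen : u.length = v.length) (c : α) (h : Cmp u v) :
    Cmp (u ++ [c]) (v ++ [c]) := by
  obtain ⟨j, hj, hbey, a, b, ha, hb, hab⟩ := h
  refine ⟨j, by simp; omega, ?_, a, b, ?_, ?_, hab⟩
  · intro j' hj'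
    rcases lt_trichotomy j' u.length with h1 | h1 | h1
    · rw [List.getElem?_append_left h1, List.getElem?_append_left (by omega)]
      exact hbey j' hj'
    · subst h1
      rw [List.getElem?_append_right le_rfl, List.getElem?_append_right (by omega), hlen]
    · rw [List.getElem?_eq_none (by simp; omega), List.getElem?_eq_none (by simp; omega)]
  · rw [List.getElem?_append_left hj]; exact ha
  · rw [List.getElem?_append_left (by omega)]; exact hb

lemma cmp_last_le {u v : List α} (h : Cmp u v) (hlen : u.length = v.length)
    {a b : α} (ha : u.getLast? = some a) (hb : v.getLast? = some b) : a ≤ b := by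
  obtain ⟨j, hj, hbey, a', b', ha', hb', hab⟩ := h
  rw [List.getLast?_eq_getElem?] at ha hb
  by_cases hj1 : j = u.length - 1
  · rw [← hj1] at ha
    rw [← hlen, ← hj1] at hb
    rw [ha'] at ha
    rw [hb'] at hb
    have e1 : a = a' := Option.some_injective _ ha.symm
    have e2 : b = b' := Option.some_injective _ hb.symm
    rw [e1, e2]
    exact le_of_lt hab
  · have hgt : j < u.length - 1 := by omega
    have he := hbey (u.length - 1) (by omega)
    rw [← hlen] at hb
    rw [he] at ha
    rw [hb] at ha
    exact le_of_eq (Option.some_injective _ ha.symm)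

lemma cmp_asym {u v : List α} (h1 : Cmp u v) (h2 : Cmp v u) : False := by
  obtain ⟨j1, hj1, hbey1, a1, b1, ha1, hb1, hab1⟩ := h1
  obtain ⟨j2, hj2, hbey2, a2, b2, ha2, hb2, hab2⟩ := h2
  rcases lt_trichotomy j1 j2 with h | h | h
  · have he := hbey1 j2 h
    rw [hb2, ha2] at he
    exact absurd (Option.some_injective _ he) (ne_of_gt hab2)
  · subst h
    rw [ha1] at hb2
    rw [hb1] at ha2
    have e1 : a1 = b2 := Option.some_injective _ hb2
    have e2 : b1 = a2 := Option.some_injective _ ha2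
    have h3 : a1 < b2 := lt_trans (e2 ▸ hab1) hab2
    exact lt_irrefl _ (e1 ▸ h3)
  · have he := hbey2 j1 h
    rw [ha1, hb1] at he
    exact absurd (Option.some_injective _ he) (ne_of_gt hab1)

lemma cmp_total {u v : List α} (hlen : u.length = v.length) (hne : u ≠ v) :
    Cmp u v ∨ Cmp v u := by
  classical
  have hex : ∃ i : ℕ, u[i]? ≠ v[i]? := by
    by_contra h
    push_neg at h
    exact hne (List.ext_getElem? h)
  obtain ⟨i0, hi0⟩ := hex
  have hi0le : i0 ≤ u.length := by
    by_contra h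
    push_neg at h
    exact hi0 (by rw [List.getElem?_eq_none (by omega), List.getElem?_eq_none (by omega)])
  set P : ℕ → Prop := fun i => u[i]? ≠ v[i]? with hP
  have hPj : P (Nat.findGreatest P u.length) := Nat.findGreatest_spec hi0le hi0
  set j := Nat.findGreatest P u.length with hjdef
  have hjlt : j < u.length := by
    by_contra h
    push_neg at h
    exact hPj (by rw [List.getElem?_eq_none (by omega), List.getElem?_eq_none (by omega)])
  have hbey : ∀ j', j < j' → u[j']? = v[j']? := by
    intro j' hj'
    by_cases hj'le : j' ≤ u.length
    · by_contra hne'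
      exact (Nat.findGreatest_is_greatest hj' hj'le) hne'
    · rw [List.getElem?_eq_none (by omega), List.getElem?_eq_none (by omega)]
  obtain ⟨a, ha⟩ : ∃ a, u[j]? = some a := ⟨u[j]'hjlt, List.getElem?_eq_getElem hjlt⟩
  obtain ⟨b, hb⟩ : ∃ b, v[j]? = some b :=
    ⟨v[j]'(by omega), List.getElem?_eq_getElem (by omega)⟩
  have hne_ab : a ≠ b := by
    intro h
    apply hPj
    rw [ha, hb, h]
  rcases hne_ab.lt_or_gt with h | h
  · exact Or.inl ⟨j, hjlt, hbey, a, b, ha, hb, h⟩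
  · exact Or.inr ⟨j, by omega, fun j' hj' => (hbey j' hj').symm, b, a, hb, ha, h⟩

lemma minimal_pair {x y : List α} {s t : ℕ}
    (heq : vstar^[s+1] x = vstar^[t+1] y)
    (hu : vstar^[s] x ≠ []) (hv : vstar^[t] y ≠ [])
    (hne : vstar^[s] x ≠ vstar^[t] y) :
    ∀ s' t' : ℕ, vstar^[s'+1] x = vstar^[t'+1] y → s ≤ s' ∧ t ≤ t' := by
  have hsn : s < x.length := by
    have h1 := length_viter s x
    have h2 : 0 < (vstar^[s] x).length := List.length_pos_iff.mpr hu
    omega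
  have htm : t < y.length := by
    have h1 := length_viter t y
    have h2 : 0 < (vstar^[t] y).length := List.length_pos_iff.mpr hv
    omega
  have hl0 : x.length - (s+1) = y.length - (t+1) := by
    have h1 := congrArg List.length heq
    rwa [length_viter, length_viter] at h1
  intro s' t' h'
  have hl' : x.length - (s'+1) = y.length - (t'+1) := by
    have h1 := congrArg List.length h'
    rwa [length_viter, length_viter] at h1
  by_cases hcs : s ≤ s'
  · refine ⟨hcs, ?_⟩
    by_contra htc
    push_neg at htc
    omega
  · push_neg at hcs
    exfalso
    have htc : t' < t := by omega
    have h2 := congrArg (vstar^[s - s' - 1]) h'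
    rw [← Function.iterate_add_apply, ← Function.iterate_add_apply] at h2
    rw [show s - s' - 1 + (s'+1) = s by omega, show s - s' - 1 + (t'+1) = t by omega] at h2
    exact hne h2

lemma vless_of_cmp (x y : List α) (s t : ℕ)
    (h1 : ¬ ∃ k, vstar^[k] y = x) (h2 : ¬ ∃ k, vstar^[k] x = y)
    (heq : vstar^[s+1] x = vstar^[t+1] y)
    (hcmp : Cmp (vstar^[s] x) (vstar^[t] y)) : VLess x y := by
  obtain ⟨j, hj, hbey, a, b, ha, hb, hab⟩ := hcmp
  have hu : vstar^[s] x ≠ [] := by intro h0; rw [h0] at ha; simp at ha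
  have hv : vstar^[t] y ≠ [] := by intro h0; rw [h0] at hb; simp at hb
  have hne : vstar^[s] x ≠ vstar^[t] y := by
    intro h0
    rw [h0, hb] at ha
    exact absurd (Option.some_injective _ ha) (ne_of_gt hab)
  exact Or.inr ⟨h1, h2, s, t, heq, minimal_pair heq hu hv hne,
    j, hj, hbey, a, b, ha, hb, hab⟩

lemma path_iff {x y : List α} :
    (∃ k, vstar^[k] y = x) ↔
      x.length ≤ y.length ∧ vstar^[y.length - x.length] y = x := by
  constructor
  · rintro ⟨k, hk⟩
    have hl : x.length = y.length - k := by rw [← hk, length_viter]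
    rcases le_or_gt k y.length with h | h
    · exact ⟨by omega, by rw [show y.length - x.length = k by omega]; exact hk⟩
    · have hx : x = [] := by rw [← hk]; exact viter_of_le (by omega)
      subst hx
      refine ⟨by simp, ?_⟩
      simp only [List.length_nil, Nat.sub_zero]
      exact viter_of_le le_rfl
  · rintro ⟨h1, h2⟩
    exact ⟨_, h2⟩

lemma not_path_of_lt {x y : List α} (h : y.length < x.length) :
    ¬ ∃ k, vstar^[k] y = x := by
  rintro ⟨k, hk⟩
  have := length_viter k y
  rw [hk] at this
  omega

lemma append_singleton_inj {u v : List α} {c : α} (h : u ++ [c] = v ++ [c]) : u = v :=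
  (List.append_left_inj [c]).mp h

lemma ndprime (x y : List α) (lam : α) (hnd : ¬ ∃ k, vstar^[k] y = x) :
    ¬ ∃ k, vstar^[k] (y ++ [lam]) = x ++ [lam] := by
  obtain ⟨K, hKle, PC1, PC2, PC3, PC4⟩ := path_corr y lam
  rintro ⟨k, hk⟩
  rcases le_or_gt k K with h | h
  · rw [PC1 k h] at hk
    exact hnd ⟨k, append_singleton_inj hk⟩
  · rw [PC2 k h] at hk
    have hlast : (vstar^[k-1] y).getLast? = some lam := by
      rw [hk]
      exact List.getLast?_concat
    exact absurd (breaklast PC4 (k-1) (by omega) lam hlast) (lt_irrefl lam)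

lemma vless_forward (x y : List α) (lam : α) (hxy : x ≠ y) (h : VLess x y) :
    VLess (x ++ [lam]) (y ++ [lam]) := by
  obtain ⟨Kx, hKxle, P1x, P2x, P3x, P4x⟩ := path_corr x lam
  obtain ⟨Ky, hKyle, P1y, P2y, P3y, P4y⟩ := path_corr y lam
  rcases h with ⟨k, hk0, hk⟩ | ⟨h1, h2, s, t, heq, _hmin, j, hj, hbey, a, b, ha, hb, hab⟩
  · -- CASE 1 : x is on the star-path of y
    have hm0 : y ≠ [] := by
      rintro rfl
      exact hxy (by rw [← hk, viter_nil])
    have hlen : x.length = y.length - k := by rw [← hk, length_viter]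
    have hmpos : 0 < y.length := List.length_pos_iff.mpr hm0
    have hnm : x.length < y.length := by
      rcases le_or_gt k y.length with h | h
      · omega
      · have hx : x = [] := by rw [← hk]; exact viter_of_le (by omega)
        rw [hx, List.length_nil]
        exact hmpos
    have hDk : vstar^[y.length - x.length] y = x := (path_iff.mp ⟨k, hk⟩).2
    set d := y.length - x.length with hd
    have hd0 : 0 < d := by omega
    rcases le_or_gt d Ky with hcase | hcase
    · exact Or.inl ⟨d, hd0, by rw [P1y d hcase, hDk]⟩
    · by_cases hP : vstar^[d-1] y = x ++ [lam]
      · exact Or.inl ⟨d, hd0, by rw [P2y d hcase]; exact hP⟩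
      · have hKx0 : Kx = 0 := by
          by_contra h0
          obtain ⟨hxne, hxlast⟩ := P3x 0 (by omega)
          rw [Function.iterate_zero_apply] at hxne hxlast
          obtain ⟨a0, ha0⟩ := exists_getLast hxne
          have hle' := hxlast a0 ha0
          have hlast' : (vstar^[d] y).getLast? = some a0 := by rw [hDk]; exact ha0
          have := breaklast P4y d (by omega) a0 hlast'
          exact absurd hle' (not_le.mpr this)
        apply vless_of_cmp (x ++ [lam]) (y ++ [lam]) 0 d
        · rintro ⟨k', hk'⟩
          have hexp : (y ++ [lam]).length - (x ++ [lam]).length = d := by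
            simp only [List.length_append, List.length_singleton]
            omega
          have h2' := (path_iff.mp ⟨k', hk'⟩).2
          rw [hexp, P2y d hcase] at h2'
          exact hP h2'
        · apply not_path_of_lt
          simp only [List.length_append, List.length_singleton]
          omega
        · rw [P2x 1 (by omega), P2y (d+1) (by omega),
            show (1:ℕ) - 1 = 0 from rfl, show d + 1 - 1 = d from rfl,
            Function.iterate_zero_apply, hDk]
        · rw [Function.iterate_zero_apply, P2y d hcase]
          have hPne : vstar^[d-1] y ≠ [] := by
            intro h0
            have := length_viter (d-1) y
            rw [h0] at this
            simp at this
            omega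
          obtain ⟨q, hq⟩ := exists_getLast hPne
          have hlamq := breaklast P4y (d-1) (by omega) q hq
          refine cmp_of_last ?_ (List.getLast?_concat) hq hlamq
          rw [length_viter]
          simp only [List.length_append, List.length_singleton]
          omega
  · -- CASE 2 : proper divergence
    have hune : vstar^[s] x ≠ [] := by intro h0; rw [h0] at ha; simp at ha
    have hvne : vstar^[t] y ≠ [] := by intro h0; rw [h0] at hb; simp at hb
    have hsn : s < x.length := by
      have h1 := length_viter s x
      have h2 : 0 < (vstar^[s] x).length := List.length_pos_iff.mpr hune
      omega
    have htm : t < y.length := by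
      have h1 := length_viter t y
      have h2 : 0 < (vstar^[t] y).length := List.length_pos_iff.mpr hvne
      omega
    have hleq : x.length - (s+1) = y.length - (t+1) := by
      have h1 := congrArg List.length heq
      rwa [length_viter, length_viter] at h1
    have hlen_uv : (vstar^[s] x).length = (vstar^[t] y).length := by
      rw [length_viter, length_viter]
      omega
    have hcmp_uv : Cmp (vstar^[s] x) (vstar^[t] y) := ⟨j, hj, hbey, a, b, ha, hb, hab⟩
    have nd1 := ndprime x y lam h1
    have nd2 := ndprime y x lam h2
    rcases le_or_gt Kx s with hx1 | hx1 <;> rcases le_or_gt Ky t with hy1 | hy1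
    · -- 2a : both breaks above the divergence
      apply vless_of_cmp (x ++ [lam]) (y ++ [lam]) (s+1) (t+1) nd1 nd2
      · rw [P2x (s+2) (by omega), P2y (t+2) (by omega),
          show s+1+1-1 = s+1 from rfl, show t+1+1-1 = t+1 from rfl]
        exact heq
      · rw [P2x (s+1) (by omega), P2y (t+1) (by omega),
          show s+1-1 = s from rfl, show t+1-1 = t from rfl]
        exact hcmp_uv
    · -- 2b : impossible (x-side qualifies, y-side does not, yet a < b)
      exfalso
      obtain ⟨au, hau⟩ := exists_getLast hune
      have h_au := breaklast P4x s hx1 au hau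
      obtain ⟨hv_ne', hv_le⟩ := P3y t hy1
      obtain ⟨bv, hbv⟩ := exists_getLast hvne
      have h_bv := hv_le bv hbv
      have h_ab := cmp_last_le hcmp_uv hlen_uv hau hbv
      have : lam < lam := lt_of_lt_of_le h_au (le_trans h_ab h_bv)
      exact lt_irrefl _ this
    · -- 2c : y-side qualifies at the divergence
      have hKx : Kx = s + 1 := by
        by_contra h0
        have hs2 : s + 1 < Kx := by omega
        obtain ⟨hmne, hmle⟩ := P3x (s+1) hs2
        obtain ⟨c0, hc0⟩ := exists_getLast hmne
        have hle0 := hmle c0 hc0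
        have hc0' : (vstar^[t+1] y).getLast? = some c0 := by rw [← heq]; exact hc0
        have := breaklast P4y (t+1) (by omega) c0 hc0'
        exact absurd hle0 (not_le.mpr this)
      apply vless_of_cmp (x ++ [lam]) (y ++ [lam]) (s+1) (t+1) nd1 nd2
      · rw [P2x (s+2) (by omega), P2y (t+2) (by omega),
          show s+1+1-1 = s+1 from rfl, show t+1+1-1 = t+1 from rfl]
        exact heq
      · rw [P1x (s+1) (by omega), P2y (t+1) (by omega), show t+1-1 = t from rfl]
        obtain ⟨bq, hbq⟩ := exists_getLast hvne
        have hlam_bq := breaklast P4y t hy1 bq hbq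
        refine cmp_of_last ?_ (List.getLast?_concat) hbq hlam_bq
        rw [length_viter]
        simp only [List.length_append, List.length_singleton, length_viter]
        omega
    · -- 2d : both sides below their breaks; lift everything by [lam]
      apply vless_of_cmp (x ++ [lam]) (y ++ [lam]) s t nd1 nd2
      · rw [P1x (s+1) (by omega), P1y (t+1) (by omega), heq]
      · rw [P1x s (by omega), P1y t (by omega)]
        exact cmp_append hlen_uv lam hcmp_uv

lemma vless_asymm (x y : List α) (hxy : x ≠ y) (h1 : VLess x y) (h2 : VLess y x) :
    False := by
  rcases h1 with ⟨k, hk0, hk⟩ | ⟨hn1, hn2, s, t, heq, hmin, hcmp⟩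
  · rcases h2 with ⟨k', hk0', hk'⟩ | ⟨hn1', hn2', _⟩
    · have hy0 : y ≠ [] := by
        rintro rfl
        exact hxy (by rw [← hk, viter_nil])
      have hx0 : x ≠ [] := by
        rintro rfl
        exact hxy.symm (by rw [← hk', viter_nil])
      have l1 : x.length = y.length - k := by rw [← hk, length_viter]
      have l2 : y.length = x.length - k' := by rw [← hk', length_viter]
      have p1 : 0 < x.length := List.length_pos_iff.mpr hx0
      have p2 : 0 < y.length := List.length_pos_iff.mpr hy0
      omega
    · exact hn2' ⟨k, hk⟩
  · rcases h2 with ⟨k', hk0', hk'⟩ | ⟨hn1', hn2', s', t', heq', hmin', hcmp'⟩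
    · exact hn2 ⟨k', hk'⟩
    · obtain ⟨e1, e2⟩ := hmin t' s' heq'.symm
      obtain ⟨e3, e4⟩ := hmin' t s heq.symm
      have hts : t' = s := by omega
      have hst : s' = t := by omega
      subst hts hst
      exact cmp_asym hcmp hcmp'

lemma vless_total (x y : List α) (hxy : x ≠ y) : VLess x y ∨ VLess y x := by
  classical
  by_cases hD : ∃ k, vstar^[k] y = x
  · obtain ⟨k, hk⟩ := hD
    have hk0 : 0 < k := by
      rcases Nat.eq_zero_or_pos k with rfl | h
      · rw [Function.iterate_zero_apply] at hk
        exact absurd hk.symm hxy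
      · exact h
    exact Or.inl (Or.inl ⟨k, hk0, hk⟩)
  · by_cases hD' : ∃ k, vstar^[k] x = y
    · obtain ⟨k, hk⟩ := hD'
      have hk0 : 0 < k := by
        rcases Nat.eq_zero_or_pos k with rfl | h
        · rw [Function.iterate_zero_apply] at hk
          exact absurd hk hxy
        · exact h
      exact Or.inr (Or.inl ⟨k, hk0, hk⟩)
    · have hex : ∃ s, ∃ t, vstar^[s+1] x = vstar^[t+1] y :=
        ⟨x.length, y.length, by rw [viter_of_le (by omega), viter_of_le (by omega)]⟩
      set s0 := Nat.find hex with hs0def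
      obtain ⟨t1, ht1⟩ := Nat.find_spec hex
      have hexB : ∃ t, vstar^[s0+1] x = vstar^[t+1] y := ⟨t1, ht1⟩
      set t0 := Nat.find hexB with ht0def
      have heq0 : vstar^[s0+1] x = vstar^[t0+1] y := Nat.find_spec hexB
      have hu0 : vstar^[s0] x ≠ [] := by
        intro h0
        rcases Nat.eq_zero_or_pos s0 with hs | hs
        · rw [hs, Function.iterate_zero_apply] at h0
          subst h0
          exact hD ⟨y.length, viter_of_le le_rfl⟩
        · have hnil : vstar^[s0+1] x = [] := by
            rw [Function.iterate_succ_apply', h0, vstar_nil]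
          refine Nat.find_min hex (m := s0 - 1) (by omega) ⟨t0, ?_⟩
          rw [show s0 - 1 + 1 = s0 by omega, h0, ← heq0, hnil]
      have hv0 : vstar^[t0] y ≠ [] := by
        intro h0
        rcases Nat.eq_zero_or_pos t0 with ht | ht
        · rw [ht, Function.iterate_zero_apply] at h0
          subst h0
          exact hD' ⟨x.length, viter_of_le le_rfl⟩
        · have hnil : vstar^[t0+1] y = [] := by
            rw [Function.iterate_succ_apply', h0, vstar_nil]
          refine Nat.find_min hexB (m := t0 - 1) (by omega) ?_
          rw [show t0 - 1 + 1 = t0 by omega, h0, heq0, hnil]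
      have hne0 : vstar^[s0] x ≠ vstar^[t0] y := by
        intro h0
        rcases Nat.eq_zero_or_pos s0 with hs | hs
        · rw [hs, Function.iterate_zero_apply] at h0
          exact hD ⟨t0, h0.symm⟩
        · rcases Nat.eq_zero_or_pos t0 with ht | ht
          · rw [ht, Function.iterate_zero_apply] at h0
            exact hD' ⟨s0, h0⟩
          · refine Nat.find_min hex (m := s0 - 1) (by omega) ⟨t0 - 1, ?_⟩
            rw [show s0 - 1 + 1 = s0 by omega, show t0 - 1 + 1 = t0 by omega]
            exact h0
      have hl : (vstar^[s0] x).length = (vstar^[t0] y).length := by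
        have h1 := congrArg List.length heq0
        rw [length_viter, length_viter] at h1
        have p1 : 0 < (vstar^[s0] x).length := List.length_pos_iff.mpr hu0
        have p2 : 0 < (vstar^[t0] y).length := List.length_pos_iff.mpr hv0
        rw [length_viter] at p1
        rw [length_viter] at p2
        rw [length_viter, length_viter]
        omega
      rcases cmp_total hl hne0 with hc | hc
      · exact Or.inl (vless_of_cmp x y s0 t0 hD hD' heq0 hc)
      · exact Or.inr (vless_of_cmp y x t0 s0 hD' hD heq0.symm hc)

/-- Appending the same letter on the right preserves (and reflects) V-order:
for distinct strings `x`, `y`, `x ≺ y ⟺ xλ ≺ yλ`. -/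
theorem vless_append_right_iff {α : Type*} [LinearOrder α]
    (x y : List α) (lam : α) (hxy : x ≠ y) :
    VLess x y ↔ VLess (x ++ [lam]) (y ++ [lam]) := by
  have hxy' : x ++ [lam] ≠ y ++ [lam] := fun h => hxy (append_singleton_inj h)
  constructor
  · exact vless_forward x y lam hxy
  · intro h'
    rcases vless_total x y hxy with h | h
    · exact h
    · exact absurd h' (fun h'' =>
        vless_asymm _ _ hxy' h'' (vless_forward y x lam hxy.symm h))
end
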